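/- Let H be a real Hilbert space, V a closed subspace of H, and P the orthogonal projection of H onto V. Then for all x, y ∈ H, |⟨x, y⟩| ≤ D(x, y|P) ≤ ‖x‖·‖y‖ (enhanced Cauchy–Schwarz inequality). -/

import Mathlib

open scoped RealInnerProductSpace

lemma two_cs (a b c d : ℝ) (ha : 0 ≤ a) (hb : 0 ≤ b) (hc : 0 ≤ c) (hd : 0 ≤ d) :
    a * b + c * d ≤ Real.sqrt (a ^ 2 + c ^ 2) * Real.sqrt (b ^ 2 + d ^ 2) := by
  have hs : Real.sqrt (a ^ 2 + c ^ 2) ^ 2 = a ^ 2 + c ^ 2 := Real.sq_sqrt (by positivity)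
  have ht : Real.sqrt (b ^ 2 + d ^ 2) ^ 2 = b ^ 2 + d ^ 2 := Real.sq_sqrt (by positivity)
  have hsn := Real.sqrt_nonneg (a ^ 2 + c ^ 2)
  have htn := Real.sqrt_nonneg (b ^ 2 + d ^ 2)
  nlinarith [sq_nonneg (a * d - c * b), sq_nonneg (Real.sqrt (a ^ 2 + c ^ 2) * Real.sqrt (b ^ 2 + d ^ 2) - a * b - c * d), mul_nonneg hsn htn, mul_nonneg (mul_nonneg ha hb) (mul_nonneg hc hd)]

/-- **Enhanced Cauchy–Schwarz inequality.** For a real Hilbert space `H`, a closed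
subspace `V` of `H` (equivalently, a subspace admitting an orthogonal projection `P`),
and all `x, y ∈ H`, `|⟨x, y⟩| ≤ ‖Px‖ ‖Py‖ + ‖x - Px‖ ‖y - Py‖ ≤ ‖x‖ ‖y‖`. -/
theorem enhanced_cauchy_schwarz {H : Type*} [NormedAddCommGroup H]
    [InnerProductSpace ℝ H] [CompleteSpace H]
    (V : Submodule ℝ H) [Submodule.HasOrthogonalProjection V] (x y : H) :
    |⟪x, y⟫| ≤ ‖(Submodule.orthogonalProjectionOnto V x : H)‖ * ‖(Submodule.orthogonalProjectionOnto V y : H)‖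
        + ‖x - (Submodule.orthogonalProjectionOnto V x : H)‖ * ‖y - (Submodule.orthogonalProjectionOnto V y : H)‖ ∧
    ‖(Submodule.orthogonalProjectionOnto V x : H)‖ * ‖(Submodule.orthogonalProjectionOnto V y : H)‖
        + ‖x - (Submodule.orthogonalProjectionOnto V x : H)‖ * ‖y - (Submodule.orthogonalProjectionOnto V y : H)‖
      ≤ ‖x‖ * ‖y‖ := by
  set px : H := (Submodule.orthogonalProjectionOnto V x : H) with hpx
  set py : H := (Submodule.orthogonalProjectionOnto V y : H) with hpy
  have hx : (x - px : H) ∈ Vᗮ := Submodule.sub_starProjection_mem_orthogonal (K := V) x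
  have hy : (y - py : H) ∈ Vᗮ := Submodule.sub_starProjection_mem_orthogonal (K := V) y
  have h1 : ⟪px, y - py⟫ = 0 := hy px (Submodule.orthogonalProjectionOnto V x).2
  have h2 : ⟪x - px, py⟫ = 0 := by
    rw [real_inner_comm]; exact hx py (Submodule.orthogonalProjectionOnto V y).2
  have hsplit : ⟪x, y⟫ = ⟪px, py⟫ + ⟪x - px, y - py⟫ := by
    have e : ⟪x, y⟫ = ⟪px + (x - px), py + (y - py)⟫ := by
      congr 1 <;> abel
    rw [e, inner_add_right, inner_add_left, inner_add_left, h1, h2]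
    ring
  constructor
  · calc |⟪x, y⟫| ≤ |⟪px, py⟫| + |⟪x - px, y - py⟫| := by
          rw [hsplit]; exact abs_add_le _ _
      _ ≤ ‖px‖ * ‖py‖ + ‖x - px‖ * ‖y - py‖ :=
          add_le_add (abs_real_inner_le_norm _ _) (abs_real_inner_le_norm _ _)
  · have hxn : ‖x‖ = Real.sqrt (‖px‖ ^ 2 + ‖x - px‖ ^ 2) := by
      rw [← Real.sqrt_sq (norm_nonneg x), Submodule.norm_sq_eq_add_norm_sq_projection x V]
      congr 2
      rw [Submodule.coe_norm, Submodule.orthogonalProjectionOnto_orthogonal]; rfl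
    have hyn : ‖y‖ = Real.sqrt (‖py‖ ^ 2 + ‖y - py‖ ^ 2) := by
      rw [← Real.sqrt_sq (norm_nonneg y), Submodule.norm_sq_eq_add_norm_sq_projection y V]
      congr 2
      rw [Submodule.coe_norm, Submodule.orthogonalProjectionOnto_orthogonal]; rfl
    rw [hxn, hyn]
    exact two_cs _ _ _ _ (norm_nonneg _) (norm_nonneg _) (norm_nonneg _) (norm_nonneg _)
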